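/- For every complex z with 0 < |z| < 1, the series sum over k≥1 of z^(2k)/((2k-1)(2k)^2(2k+1)) equals 1/2 - (1/4)Li₂(z²) - (1/2)((1-z²)/z)·arctanh(z), where Li₂ is the dilogarithm. -/

import Mathlib

noncomputable def carctanh (z : ℂ) : ℂ := (1 / 2) * Complex.log ((1 + z) / (1 - z))

noncomputable def Li2 (z : ℂ) : ℂ := ∑' n : ℕ, z ^ (n + 1) / ((n : ℂ) + 1) ^ 2

open Complex in
lemma aux_log_div {z : ℂ} (h : ‖z‖ < 1) :
    Complex.log ((1 + z) / (1 - z)) = Complex.log (1 + z) - Complex.log (1 - z) := by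
  have hre1 : 0 < (1 + z).re := by
    have := Complex.abs_re_le_norm z
    simp only [add_re, one_re]
    cases' abs_le.mp this with h1 h2
    linarith
  have hre2 : 0 < (1 - z).re := by
    have := Complex.abs_re_le_norm z
    simp only [sub_re, one_re]
    cases' abs_le.mp this with h1 h2
    linarith
  have h1 : (1 + z) ≠ 0 := fun hh => by simp [hh] at hre1
  have h2 : (1 - z) ≠ 0 := fun hh => by simp [hh] at hre2
  have a1 : |arg (1 + z)| < Real.pi / 2 := abs_arg_lt_pi_div_two_iff.mpr (Or.inl hre1)
  have a2 : |arg (1 - z)| < Real.pi / 2 := abs_arg_lt_pi_div_two_iff.mpr (Or.inl hre2)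
  have harg2 : arg (1 - z) ≠ Real.pi := by
    intro hh
    rw [hh] at a2
    have := Real.pi_pos
    rw [abs_of_pos this] at a2
    linarith
  have hmem : arg (1 + z) + arg ((1 - z)⁻¹) ∈ Set.Ioc (-Real.pi) Real.pi := by
    rw [Complex.arg_inv, if_neg harg2]
    have := Real.pi_pos
    constructor
    · cases' abs_lt.mp a1 with q1 q2
      cases' abs_lt.mp a2 with q3 q4
      linarith
    · cases' abs_lt.mp a1 with q1 q2
      cases' abs_lt.mp a2 with q3 q4
      linarith
  rw [div_eq_mul_inv, Complex.log_mul h1 (inv_ne_zero h2) hmem, Complex.log_inv _ harg2]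
  ring

open Complex in
lemma aux_atanh_series {z : ℂ} (h : ‖z‖ < 1) :
    HasSum (fun k : ℕ => z ^ (2 * k + 1) / (2 * (k : ℂ) + 1)) (carctanh z) := by
  have hn : ‖z‖ < 1 := h
  have hn' : ‖-z‖ < 1 := by rwa [norm_neg]
  have h1 := Complex.hasSum_taylorSeries_neg_log hn
  have h2 := Complex.hasSum_taylorSeries_neg_log hn'
  rw [sub_neg_eq_add] at h2
  have h3 := (h1.sub h2).mul_left (1 / 2)
  have hinj : Function.Injective (fun k : ℕ => 2 * k + 1) := by
    intro a b hab; dsimp only at hab; omega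
  have hzero : ∀ n : ℕ, n ∉ Set.range (fun k : ℕ => 2 * k + 1) →
      (1 / 2 : ℂ) * (z ^ n / n - (-z) ^ n / n) = 0 := by
    intro n hn
    have heven : Even n := by
      rcases Nat.even_or_odd n with he | ho
      · exact he
      · exfalso; obtain ⟨m, hm⟩ := ho; exact hn ⟨m, hm.symm⟩
    rw [heven.neg_pow]
    ring
  have h4 := (hinj.hasSum_iff hzero).mpr h3
  have key : (fun k : ℕ => z ^ (2 * k + 1) / (2 * (k : ℂ) + 1)) =
      (fun n : ℕ => (1 / 2 : ℂ) * (z ^ n / n - (-z) ^ n / n)) ∘ (fun k => 2 * k + 1) := by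
    funext k
    simp only [Function.comp_apply]
    rw [Odd.neg_pow ⟨k, by ring⟩]
    push_cast
    ring
  rw [key]
  convert h4 using 1
  rw [carctanh, aux_log_div h]
  ring

open Complex in
lemma aux_Li2 {w : ℂ} (h : ‖w‖ < 1) :
    HasSum (fun n : ℕ => w ^ (n + 1) / ((n : ℂ) + 1) ^ 2) (Li2 w) := by
  have hsum : Summable (fun n : ℕ => w ^ (n + 1) / ((n : ℂ) + 1) ^ 2) := by
    apply Summable.of_norm
    refine Summable.of_nonneg_of_le (f := fun n : ℕ => ‖w‖ ^ n) (fun n => norm_nonneg _)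
      (fun n => ?_) (summable_geometric_of_lt_one (norm_nonneg _) (show ‖w‖ < 1 from h))
    · 
      rw [norm_div, norm_pow, norm_pow]
      have h1 : ‖w‖ ^ (n + 1) ≤ ‖w‖ ^ n := by
        apply pow_le_pow_of_le_one (norm_nonneg _) (le_of_lt h)
        omega
      have h2 : (1 : ℝ) ≤ ‖((n : ℂ) + 1)‖ ^ 2 := by
        have : (1 : ℝ) ≤ ‖((n : ℂ) + 1)‖ := by
          rw [show ((n : ℂ) + 1) = ((n + 1 : ℕ) : ℂ) by push_cast; ring]
          rw [Complex.norm_natCast]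
          exact_mod_cast Nat.one_le_iff_ne_zero.mpr (Nat.succ_ne_zero n)
        nlinarith [norm_nonneg ((n : ℂ) + 1)]
      calc ‖w‖ ^ (n + 1) / ‖(n : ℂ) + 1‖ ^ 2 ≤ ‖w‖ ^ (n + 1) / 1 := by
            apply div_le_div_of_nonneg_left
            · positivity
            · norm_num
            · exact h2
          _ = ‖w‖ ^ (n + 1) := by ring
          _ ≤ ‖w‖ ^ n := h1
  exact hsum.hasSum

theorem stmt_7 (z : ℂ) (hz : z ≠ 0) (h : ‖z‖ < 1) :
    ∑' k : ℕ, z ^ (2 * k + 2) / ((2 * (k : ℂ) + 1) * (2 * k + 2) ^ 2 * (2 * k + 3)) =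
      1 / 2 - (1 / 4) * Li2 (z ^ 2) - (1 / 2) * ((1 - z ^ 2) / z) * carctanh z := by
  have hodd := aux_atanh_series h
  -- A : sum z^(2k+2)/(2k+1) = z * carctanh z
  have hA : HasSum (fun k : ℕ => z ^ (2 * k + 2) / (2 * (k : ℂ) + 1)) (z * carctanh z) := by
    have := hodd.mul_left z
    convert this using 2 with k
    · rfl
    rw [pow_succ']
    ring
  -- C : sum z^(2k+2)/(2k+3) = z⁻¹ * (carctanh z - z)
  have hC : HasSum (fun k : ℕ => z ^ (2 * k + 2) / (2 * (k : ℂ) + 3))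
      (z⁻¹ * (carctanh z - z)) := by
    have hshift : HasSum (fun k : ℕ => z ^ (2 * (k + 1) + 1) / (2 * ((k + 1 : ℕ) : ℂ) + 1))
        (carctanh z - z) := by
      refine (hasSum_nat_add_iff (f := fun k : ℕ => z ^ (2 * k + 1) / (2 * (k : ℂ) + 1)) 1).mpr ?_
      convert hodd using 1
      · rfl
      simp
    have h5 := hshift.mul_left z⁻¹
    have key : (fun k : ℕ => z ^ (2 * k + 2) / (2 * (k : ℂ) + 3)) =
        (fun k : ℕ => z⁻¹ * (z ^ (2 * (k + 1) + 1) / (2 * ((k + 1 : ℕ) : ℂ) + 1))) := by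
      funext k
      have d3 : (2 * (k : ℂ) + 3) ≠ 0 := by
        have : ((2 * k + 3 : ℕ) : ℂ) ≠ 0 := Nat.cast_ne_zero.mpr (by omega)
        push_cast at this; convert this using 2
      push_cast
      rw [show 2 * (k + 1) + 1 = (2 * k + 2) + 1 by ring, pow_succ,
        show (2 * ((k : ℂ) + 1) + 1) = 2 * (k : ℂ) + 3 by ring]
      field_simp
      ring
    rw [key]
    exact h5
  -- B : sum z^(2k+2)/(2k+2)^2 = (1/4) * Li2 (z^2)
  have hw : ‖z ^ 2‖ < 1 := by
    rw [norm_pow]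
    calc ‖z‖ ^ 2 ≤ ‖z‖ ^ 1 := by
          apply pow_le_pow_of_le_one (norm_nonneg _) (le_of_lt h); omega
      _ = ‖z‖ := pow_one _
      _ < 1 := h
  have hB : HasSum (fun k : ℕ => z ^ (2 * k + 2) / (2 * (k : ℂ) + 2) ^ 2)
      ((1 / 4) * Li2 (z ^ 2)) := by
    have h5 := (aux_Li2 hw).mul_left (1 / 4)
    have key : (fun k : ℕ => z ^ (2 * k + 2) / (2 * (k : ℂ) + 2) ^ 2) =
        (fun k : ℕ => (1 / 4 : ℂ) * ((z ^ 2) ^ (k + 1) / ((k : ℂ) + 1) ^ 2)) := by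
      funext k
      have hk : ((k : ℂ) + 1) ≠ 0 := Nat.cast_add_one_ne_zero k
      have d2 : (2 * (k : ℂ) + 2) ≠ 0 := by
        have : ((2 * k + 2 : ℕ) : ℂ) ≠ 0 := Nat.cast_ne_zero.mpr (by omega)
        push_cast at this; convert this using 2
      rw [← pow_mul, show 2 * (k + 1) = 2 * k + 2 by ring]
      field_simp
      ring
    rw [key]
    exact h5
  have hTot := ((hA.mul_left (1 / 2)).sub hB).sub (hC.mul_left (1 / 2))
  have heq : (fun k : ℕ => 1 / 2 * (z ^ (2 * k + 2) / (2 * (k : ℂ) + 1)) -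
        z ^ (2 * k + 2) / (2 * (k : ℂ) + 2) ^ 2 -
        1 / 2 * (z ^ (2 * k + 2) / (2 * (k : ℂ) + 3))) =
      (fun k : ℕ => z ^ (2 * k + 2) / ((2 * (k : ℂ) + 1) * (2 * k + 2) ^ 2 * (2 * k + 3))) := by
    funext k
    have d1 : (2 * (k : ℂ) + 1) ≠ 0 := by
      have : ((2 * k + 1 : ℕ) : ℂ) ≠ 0 := Nat.cast_ne_zero.mpr (by omega)
      push_cast at this; convert this using 2
    have d2 : (2 * (k : ℂ) + 2) ≠ 0 := by
      have : ((2 * k + 2 : ℕ) : ℂ) ≠ 0 := Nat.cast_ne_zero.mpr (by omega)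
      push_cast at this; convert this using 2
    have d3 : (2 * (k : ℂ) + 3) ≠ 0 := by
      have : ((2 * k + 3 : ℕ) : ℂ) ≠ 0 := Nat.cast_ne_zero.mpr (by omega)
      push_cast at this; convert this using 2
    field_simp
    ring
  rw [heq] at hTot
  rw [hTot.tsum_eq]
  field_simp
  ring
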